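/- Let f : ℝⁿ → ℂ be bounded and uniformly continuous and let G ∈ C^∞(ℝ²) be viewed as a function of a complex variable (or assume f real-valued and G ∈ C^∞(ℝ)). Suppose (S_j f)_{j≥0} is the Littlewood–Paley low-pass approximation S_j f = φ(D/2^j) f with φ ∈ 𝒮, φ = 1 on {|ξ| ≤ 1/2}, supp φ ⊂ {|ξ| ≤ 1}. Then S_j f → f uniformly, and the telescoping identity G(f) = G(S₀f) + Σ_{j=0}^∞ m_j · Δ_j f holds with uniform convergence, where Δ_j f = S_{j+1}f − S_j f and m_j = ∫₀¹ G′(S_j f + t Δ_j f) dt. -/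

import Mathlib

open MeasureTheory Filter
open scoped ENNReal NNReal FourierTransform

noncomputable section

/-- The Littlewood–Paley low-pass approximation `S_j f = φ(D/2^j) f`, realized as the
convolution of `f` with the `L¹` kernel `2^{jn} (𝓕⁻¹φ)(2^j ·)`. -/
def lowPass {n : ℕ} (φ : SchwartzMap (EuclideanSpace ℝ (Fin n)) ℂ)
    (f : EuclideanSpace ℝ (Fin n) → ℂ) (j : ℕ) (x : EuclideanSpace ℝ (Fin n)) : ℂ :=
  ∫ t, (((2 : ℝ) ^ (j * n) : ℝ) : ℂ) * 𝓕⁻ (⇑φ) (((2 : ℝ) ^ j) • t) * f (x - t)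

/-- The fundamental theorem of calculus along a segment, for a smooth function `G : ℂ → ℂ`
viewed as a function of two real variables. -/
private lemma ftc_line (G : ℂ → ℂ) (hG : ContDiff ℝ (⊤:ℕ∞) G) (a b : ℂ) :
    ∫ t in (0:ℝ)..1, fderiv ℝ G (a + t • (b - a)) (b - a) = G b - G a := by
  have hcont : Continuous fun t : ℝ => fderiv ℝ G (a + t • (b - a)) (b - a) :=
    ((hG.continuous_fderiv (by simp)).comp
      (continuous_const.add (continuous_id.smul continuous_const))).clm_apply continuous_const
  have hderiv : ∀ t ∈ Set.uIcc (0:ℝ) 1, HasDerivAt (fun t : ℝ => G (a + t • (b - a)))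
      (fderiv ℝ G (a + t • (b - a)) (b - a)) t := by
    intro t _
    have h1 : HasDerivAt (fun t : ℝ => a + t • (b - a)) (b - a) t := by
      simpa using ((hasDerivAt_id t).smul_const (b - a)).const_add a
    have h2 := (hG.differentiable (by simp) (a + t • (b - a))).hasFDerivAt
    exact h2.comp_hasDerivAt t h1
  rw [intervalIntegral.integral_eq_sub_of_hasDerivAt hderiv (hcont.intervalIntegrable 0 1)]
  simp

set_option maxHeartbeats 1600000 in
/-- **telescoping identity.** Let `f : ℝⁿ → ℂ` be bounded and uniformly
continuous, let `G : ℂ → ℂ` be smooth in the real sense (`G ∈ C^∞(ℝ²)`), and let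
`φ ∈ 𝒮(ℝⁿ)` satisfy `φ = 1` on `{|ξ| ≤ 1/2}` and `supp φ ⊆ {|ξ| ≤ 1}`. With
`S_j f` the low-pass approximations and `Δ_j f = S_{j+1}f − S_j f`, one has `S_j f → f`
uniformly, and `G(f) = G(S₀ f) + Σ_{j=0}^∞ m_j · Δ_j f` with uniform convergence, where
`m_j = ∫₀¹ G′(S_j f + t Δ_j f) dt` (the sum folds `m_j · Δ_j f` into one Bochner integral
of the Fréchet derivative of `G` applied to `Δ_j f`). -/
theorem lowpass_telescoping_identity (n : ℕ)
    (φ : SchwartzMap (EuclideanSpace ℝ (Fin n)) ℂ)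
    (hφ1 : ∀ ξ, ‖ξ‖ ≤ 1 / 2 → φ ξ = 1)
    (hφ2 : Function.support ⇑φ ⊆ Metric.closedBall 0 1)
    (f : EuclideanSpace ℝ (Fin n) → ℂ)
    (hfb : ∃ M, ∀ x, ‖f x‖ ≤ M) (hfu : UniformContinuous f)
    (G : ℂ → ℂ) (hG : ContDiff ℝ (⊤ : ℕ∞) G) :
    TendstoUniformly (fun j => lowPass φ f j) f atTop ∧
    TendstoUniformly
      (fun J x => G (lowPass φ f 0 x) +
        ∑ j ∈ Finset.range J,
          ∫ t in (0:ℝ)..1,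
            fderiv ℝ G (lowPass φ f j x + t • (lowPass φ f (j+1) x - lowPass φ f j x))
              (lowPass φ f (j+1) x - lowPass φ f j x))
      (fun x => G (f x)) atTop := by
  obtain ⟨M, hM⟩ := hfb
  have hM0 : 0 ≤ M := le_trans (norm_nonneg _) (hM 0)
  set k : SchwartzMap (EuclideanSpace ℝ (Fin n)) ℂ :=
    (SchwartzMap.fourierTransformCLE ℂ (SchwartzMap (EuclideanSpace ℝ (Fin n)) ℂ)).symm φ with hkdef
  have hkco : ⇑k = 𝓕⁻ ⇑φ := by
    rw [hkdef]; exact SchwartzMap.fourierInv_coe φ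
  have hki : Integrable (⇑k) := k.integrable
  have hfc : Continuous f := hfu.continuous
  -- the kernel has total integral one
  have hk1 : ∫ u, k u = 1 := by
    have hφk : 𝓕 (⇑k) = ⇑φ := by
      have h1 : (SchwartzMap.fourierTransformCLE ℂ (SchwartzMap (EuclideanSpace ℝ (Fin n)) ℂ)) k = φ := by
        rw [hkdef]; exact (SchwartzMap.fourierTransformCLE ℂ (SchwartzMap (EuclideanSpace ℝ (Fin n)) ℂ)).apply_symm_apply φ
      rw [← h1]; rfl
    have h0 : 𝓕 (⇑k) 0 = ∫ v, k v := by
      rw [Real.fourier_eq]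
      simp
    rw [← h0, hφk]
    exact hφ1 0 (by simp)
  -- representation by rescaling
  have hrepr : ∀ (j : ℕ) x, lowPass φ f j x = ∫ u, k u * f (x - ((2:ℝ)^j)⁻¹ • u) := by
    intro j x
    have h2j : (0:ℝ) < (2:ℝ)^j := by positivity
    have key := MeasureTheory.Measure.integral_comp_smul (volume)
      (fun u => k u * f (x - ((2:ℝ)^j)⁻¹ • u)) ((2:ℝ)^j)
    have hfr : Module.finrank ℝ (EuclideanSpace ℝ (Fin n)) = n := finrank_euclideanSpace_fin
    rw [hfr] at key
    have hlhs : (fun t => k (((2:ℝ)^j) • t) * f (x - ((2:ℝ)^j)⁻¹ • (((2:ℝ)^j) • t)))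
        = fun t => k (((2:ℝ)^j) • t) * f (x - t) := by
      funext t
      rw [inv_smul_smul₀ (ne_of_gt h2j)]
    rw [hlhs] at key
    have habs : |(((2:ℝ)^j) ^ n)⁻¹| = ((2:ℝ)^(j*n))⁻¹ := by
      rw [abs_of_nonneg (by positivity)]
      rw [← pow_mul]
    rw [habs] at key
    unfold lowPass
    rw [← hkco]
    calc ∫ t, (((2 : ℝ) ^ (j * n) : ℝ) : ℂ) * k (((2 : ℝ) ^ j) • t) * f (x - t)
        = (((2 : ℝ) ^ (j * n) : ℝ) : ℂ) * ∫ t, k (((2 : ℝ) ^ j) • t) * f (x - t) := by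
          simp_rw [mul_assoc]
          exact integral_const_mul _ _
      _ = (((2 : ℝ) ^ (j * n) : ℝ) : ℂ) *
          (((2:ℝ)^(j*n))⁻¹ • ∫ u, k u * f (x - ((2:ℝ)^j)⁻¹ • u)) := by rw [key]
      _ = ∫ u, k u * f (x - ((2:ℝ)^j)⁻¹ • u) := by
          rw [Complex.real_smul, ← mul_assoc]
          push_cast
          rw [mul_inv_cancel₀ (pow_ne_zero _ two_ne_zero), one_mul]
  -- smallness of tails of the kernel
  have htail : ∀ ε > (0:ℝ), ∃ R : ℝ, 0 ≤ R ∧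
      ∫ u in (Metric.closedBall (0:EuclideanSpace ℝ (Fin n)) R)ᶜ, ‖k u‖ < ε := by
    intro ε hε
    have hmono : Monotone (fun m : ℕ => Metric.closedBall (0:EuclideanSpace ℝ (Fin n)) (m:ℝ)) := by
      intro a b hab
      exact Metric.closedBall_subset_closedBall (by exact_mod_cast hab)
    have hun : ⋃ m : ℕ, Metric.closedBall (0:EuclideanSpace ℝ (Fin n)) (m:ℝ) = Set.univ := by
      ext x
      simp only [Set.mem_iUnion, Metric.mem_closedBall, Set.mem_univ, iff_true]
      obtain ⟨m, hm⟩ := exists_nat_ge (dist x 0)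
      exact ⟨m, hm⟩
    have htend := tendsto_setIntegral_of_monotone (f := fun u => ‖k u‖) (μ := volume)
      (fun m : ℕ => measurableSet_closedBall) hmono (by rw [hun]; exact hki.norm.integrableOn)
    rw [hun, Measure.restrict_univ] at htend
    have hlt : (∫ u, ‖k u‖) - ε < ∫ u, ‖k u‖ := by linarith
    obtain ⟨m, hm⟩ := ((tendsto_order.1 htend).1 _ hlt).exists
    refine ⟨m, Nat.cast_nonneg m, ?_⟩
    have hsplit := integral_add_compl (μ := volume)
      (measurableSet_closedBall (x := (0:EuclideanSpace ℝ (Fin n))) (ε := (m:ℝ))) hki.norm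
    linarith
  set K₁ : ℝ := ∫ u, ‖k u‖ with hK₁def
  have hK₁0 : 0 ≤ K₁ := integral_nonneg fun u => norm_nonneg _
  have hK₁1 : 1 ≤ K₁ := by
    have : ‖∫ u, k u‖ ≤ K₁ := norm_integral_le_integral_norm _
    rw [hk1] at this
    simpa using this
  -- integrability of the integrands
  have hint : ∀ (c : ℝ) (x : EuclideanSpace ℝ (Fin n)),
      Integrable (fun u => k u * f (x - c • u)) := by
    intro c x
    have hFm : AEStronglyMeasurable (fun u : EuclideanSpace ℝ (Fin n) => f (x - c • u)) volume :=
      (hfc.comp (continuous_const.sub (continuous_id.const_smul c))).aestronglyMeasurable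
    exact (hki.bdd_mul hFm (Filter.Eventually.of_forall fun u => hM _)).congr
      (Filter.Eventually.of_forall fun u => mul_comm _ _)
  -- difference representation
  have hdiff : ∀ (j : ℕ) x, lowPass φ f j x - f x
      = ∫ u, k u * (f (x - ((2:ℝ)^j)⁻¹ • u) - f x) := by
    intro j x
    have h2 : Integrable (fun u => k u * f x) := hki.mul_const _
    have hconst : ∫ u, k u * f x = f x := by
      rw [integral_mul_const, hk1, one_mul]
    rw [hrepr j x]
    calc (∫ u, k u * f (x - ((2:ℝ)^j)⁻¹ • u)) - f x
        = (∫ u, k u * f (x - ((2:ℝ)^j)⁻¹ • u)) - ∫ u, k u * f x := by rw [hconst]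
      _ = ∫ u, (k u * f (x - ((2:ℝ)^j)⁻¹ • u) - k u * f x) := (integral_sub (hint _ x) h2).symm
      _ = ∫ u, k u * (f (x - ((2:ℝ)^j)⁻¹ • u) - f x) := by simp [mul_sub]
  -- Part 1: uniform convergence of the low-pass approximations
  have part1 : TendstoUniformly (fun j => lowPass φ f j) f atTop := by
    rw [Metric.tendstoUniformly_iff]
    intro ε hε
    obtain ⟨δ, hδ0, hδ⟩ := Metric.uniformContinuous_iff.1 hfu (ε/(2*(K₁+1))) (by positivity)
    obtain ⟨R, hR0, hR⟩ := htail (ε/(2*(2*M+1))) (div_pos hε (by linarith))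
    obtain ⟨N, hN⟩ := pow_unbounded_of_one_lt (R/δ) (one_lt_two (α := ℝ))
    filter_upwards [eventually_ge_atTop N] with j hj x
    set c : ℝ := ((2:ℝ)^j)⁻¹ with hcdef
    have hc0 : 0 < c := by positivity
    have hcR : c * R < δ := by
      have h1 : R / δ < 2 ^ j := lt_of_lt_of_le hN (by
        exact pow_le_pow_right₀ one_le_two hj)
      have h2 : R < δ * 2 ^ j := by
        rw [div_lt_iff₀ hδ0] at h1; linarith
      rw [hcdef]
      rw [inv_mul_eq_div, div_lt_iff₀ (by positivity)]
      linarith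
    rw [dist_eq_norm']
    rw [hdiff j x]
    set s := Metric.closedBall (0:EuclideanSpace ℝ (Fin n)) R with hsdef
    have hsint : Integrable (fun u => k u * (f (x - c • u) - f x)) := by
      have := (hint c x).sub (hki.mul_const (f x))
      exact this.congr (Filter.Eventually.of_forall fun u => by simp [mul_sub])
    have hnormle : ‖∫ u, k u * (f (x - c • u) - f x)‖
        ≤ ∫ u, ‖k u‖ * ‖f (x - c • u) - f x‖ := by
      refine le_trans (norm_integral_le_integral_norm _) (le_of_eq ?_)
      congr 1; funext u; exact norm_mul _ _
    have hintnorm : Integrable (fun u => ‖k u‖ * ‖f (x - c • u) - f x‖) := by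
      have := hsint.norm
      exact this.congr (Filter.Eventually.of_forall fun u => (norm_mul _ _))
    have hsplit : ∫ u, ‖k u‖ * ‖f (x - c • u) - f x‖
        = (∫ u in s, ‖k u‖ * ‖f (x - c • u) - f x‖)
          + ∫ u in sᶜ, ‖k u‖ * ‖f (x - c • u) - f x‖ :=
      (integral_add_compl measurableSet_closedBall hintnorm).symm
    have hball : ∫ u in s, ‖k u‖ * ‖f (x - c • u) - f x‖ ≤ K₁ * (ε/(2*(K₁+1))) := by
      have hptwise : ∀ u ∈ s, ‖k u‖ * ‖f (x - c • u) - f x‖ ≤ ‖k u‖ * (ε/(2*(K₁+1))) := by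
        intro u hu
        refine mul_le_mul_of_nonneg_left ?_ (norm_nonneg _)
        have hdist : dist (x - c • u) x < δ := by
          rw [dist_eq_norm]
          have : x - c • u - x = -(c • u) := by abel
          rw [this, norm_neg, norm_smul, Real.norm_eq_abs, abs_of_pos hc0]
          have hu' : ‖u‖ ≤ R := by simpa [hsdef] using hu
          calc c * ‖u‖ ≤ c * R := by nlinarith
            _ < δ := hcR
        have := hδ hdist
        rw [dist_eq_norm] at this
        exact le_of_lt this
      calc ∫ u in s, ‖k u‖ * ‖f (x - c • u) - f x‖
          ≤ ∫ u in s, ‖k u‖ * (ε/(2*(K₁+1))) := by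
            refine setIntegral_mono_on hintnorm.integrableOn
              (hki.norm.mul_const _).integrableOn measurableSet_closedBall hptwise
        _ = (∫ u in s, ‖k u‖) * (ε/(2*(K₁+1))) := by rw [integral_mul_const]
        _ ≤ K₁ * (ε/(2*(K₁+1))) := by
            refine mul_le_mul_of_nonneg_right ?_ (by positivity)
            exact setIntegral_le_integral hki.norm
              (Filter.Eventually.of_forall fun u => norm_nonneg _)
    have hcompl : ∫ u in sᶜ, ‖k u‖ * ‖f (x - c • u) - f x‖ ≤ 2*M * (ε/(2*(2*M+1))) := by
      have hptwise : ∀ u ∈ sᶜ, ‖k u‖ * ‖f (x - c • u) - f x‖ ≤ ‖k u‖ * (2*M) := by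
        intro u _
        refine mul_le_mul_of_nonneg_left ?_ (norm_nonneg _)
        calc ‖f (x - c • u) - f x‖ ≤ ‖f (x - c • u)‖ + ‖f x‖ := norm_sub_le _ _
          _ ≤ M + M := add_le_add (hM _) (hM _)
          _ = 2*M := by ring
      calc ∫ u in sᶜ, ‖k u‖ * ‖f (x - c • u) - f x‖
          ≤ ∫ u in sᶜ, ‖k u‖ * (2*M) := by
            refine setIntegral_mono_on hintnorm.integrableOn
              (hki.norm.mul_const _).integrableOn measurableSet_closedBall.compl hptwise
        _ = (∫ u in sᶜ, ‖k u‖) * (2*M) := by rw [integral_mul_const]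
        _ ≤ (ε/(2*(2*M+1))) * (2*M) := by
            refine mul_le_mul_of_nonneg_right (le_of_lt hR) (by linarith)
        _ = 2*M * (ε/(2*(2*M+1))) := by ring
    have h1 : K₁ * (ε/(2*(K₁+1))) < ε / 2 := by
      rw [mul_div_assoc']
      rw [div_lt_div_iff₀ (by positivity) (by norm_num)]
      nlinarith
    have h2 : 2*M * (ε/(2*(2*M+1))) < ε / 2 := by
      rw [mul_div_assoc']
      rw [div_lt_div_iff₀ (by linarith) (by norm_num)]
      nlinarith
    calc ‖∫ u, k u * (f (x - c • u) - f x)‖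
        ≤ _ := hnormle
      _ = _ := hsplit
      _ < ε := by linarith
  refine ⟨part1, ?_⟩
  -- Part 2: uniform convergence of the telescoping partial sums
  have hbd : ∀ (j : ℕ) x, ‖lowPass φ f j x‖ ≤ M * K₁ := by
    intro j x
    rw [hrepr j x]
    calc ‖∫ u, k u * f (x - ((2:ℝ)^j)⁻¹ • u)‖
        ≤ ∫ u, ‖k u * f (x - ((2:ℝ)^j)⁻¹ • u)‖ := norm_integral_le_integral_norm _
      _ ≤ ∫ u, ‖k u‖ * M := by
          refine integral_mono_of_nonneg (Filter.Eventually.of_forall fun u => norm_nonneg _)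
            (hki.norm.mul_const M) (Filter.Eventually.of_forall fun u => ?_)
          simp only [norm_mul]
          exact mul_le_mul_of_nonneg_left (hM _) (norm_nonneg _)
      _ = M * K₁ := by rw [integral_mul_const]; ring
  have hfbd : ∀ x, ‖f x‖ ≤ M * K₁ := fun x =>
    le_trans (hM x) (by nlinarith)
  have hpartsum : ∀ (J : ℕ) x, (G (lowPass φ f 0 x) +
      ∑ j ∈ Finset.range J,
        ∫ t in (0:ℝ)..1,
          fderiv ℝ G (lowPass φ f j x + t • (lowPass φ f (j+1) x - lowPass φ f j x))
            (lowPass φ f (j+1) x - lowPass φ f j x)) = G (lowPass φ f J x) := by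
    intro J x
    have hterm : ∀ j : ℕ, (∫ t in (0:ℝ)..1,
        fderiv ℝ G (lowPass φ f j x + t • (lowPass φ f (j+1) x - lowPass φ f j x))
          (lowPass φ f (j+1) x - lowPass φ f j x))
        = G (lowPass φ f (j+1) x) - G (lowPass φ f j x) :=
      fun j => ftc_line G hG _ _
    rw [Finset.sum_congr rfl fun j _ => hterm j,
      Finset.sum_range_sub fun j => G (lowPass φ f j x)]
    ring
  have hGu := (isCompact_closedBall (0:ℂ) (M*K₁ + 1)).uniformContinuousOn_of_continuous
    hG.continuous.continuousOn
  rw [Metric.tendstoUniformly_iff]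
  intro ε hε
  obtain ⟨δ, hδ0, hδ⟩ := Metric.uniformContinuousOn_iff.1 hGu ε hε
  have := Metric.tendstoUniformly_iff.1 part1 (min δ 1) (by positivity)
  filter_upwards [this] with J hJ x
  have hmem1 : f x ∈ Metric.closedBall (0:ℂ) (M*K₁ + 1) := by
    simpa [Metric.mem_closedBall, dist_eq_norm] using le_trans (hfbd x) (by linarith)
  have hmem2 : lowPass φ f J x ∈ Metric.closedBall (0:ℂ) (M*K₁ + 1) := by
    simpa [Metric.mem_closedBall, dist_eq_norm] using le_trans (hbd J x) (by linarith)
  have hd : dist (f x) (lowPass φ f J x) < δ := lt_of_lt_of_le (hJ x) (min_le_left _ _)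
  calc dist (G (f x)) _ = dist (G (f x)) (G (lowPass φ f J x)) := by rw [hpartsum J x]
    _ < ε := hδ _ hmem1 _ hmem2 hd
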